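/- (Cyclic sum formula for t-qMZVs, depth 1) For 0 < q < 1, a real parameter t, and an integer k ≥ 2, Σ_{j=0}^{k-2} ζ_q^t(k-j, j+1) = (1 + (k-1)t)·ζ_q(k+1) + t(k-1)(1-q)·Σ_{m≥1} q^{(k-1)m}/[m]^k. -/

import Mathlib

open scoped BigOperators

/-- The q-integer [m] = (1-q^m)/(1-q). -/
noncomputable def qint (q : ℝ) (m : ℕ) : ℝ := (1 - q ^ m) / (1 - q)

/-- Depth-one q-zeta value ζ_q(k) = Σ_{m≥1} q^{(k-1)m}/[m]^k. -/
noncomputable def zetaQ (q : ℝ) (k : ℕ) : ℝ :=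
  ∑' m : ℕ, q ^ ((k - 1) * (m + 1)) / (qint q (m + 1)) ^ k

/-- Depth-two qMZV: sum over m₁ > m₂ ≥ 1, parametrized by m₂ = p.2+1, m₁ = p.2+p.1+2. -/
noncomputable def zetaQ2 (q : ℝ) (k₁ k₂ : ℕ) : ℝ :=
  ∑' p : ℕ × ℕ,
    q ^ ((k₁ - 1) * (p.2 + p.1 + 2) + (k₂ - 1) * (p.2 + 1)) /
      ((qint q (p.2 + p.1 + 2)) ^ k₁ * (qint q (p.2 + 1)) ^ k₂)

/-- Depth-two qMZSV: sum over m₁ ≥ m₂ ≥ 1, parametrized by m₂ = p.2+1, m₁ = p.2+p.1+1. -/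
noncomputable def zetaQStar2 (q : ℝ) (k₁ k₂ : ℕ) : ℝ :=
  ∑' p : ℕ × ℕ,
    q ^ ((k₁ - 1) * (p.2 + p.1 + 1) + (k₂ - 1) * (p.2 + 1)) /
      ((qint q (p.2 + p.1 + 1)) ^ k₁ * (qint q (p.2 + 1)) ^ k₂)

/-- Interpolated q-double zeta value. -/
noncomputable def zetaQT (q t : ℝ) (k₁ k₂ : ℕ) : ℝ :=
  zetaQ2 q k₁ k₂ + t * (zetaQ q (k₁ + k₂) + (1 - q) * zetaQ q (k₁ + k₂ - 1))

section Aux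
open Finset Filter

lemma q1pos {q : ℝ} (hq1 : q < 1) : (0:ℝ) < 1 - q := by linarith

lemma qpow_lt_one {q : ℝ} (hq0 : 0 < q) (hq1 : q < 1) (m : ℕ) : q ^ (m+1) < 1 :=
  pow_lt_one₀ hq0.le hq1 (Nat.succ_ne_zero m)

lemma qint_pos {q : ℝ} (hq0 : 0 < q) (hq1 : q < 1) (m : ℕ) : 0 < qint q (m+1) :=
  div_pos (by linarith [qpow_lt_one hq0 hq1 m]) (q1pos hq1)

lemma qint_ge_one {q : ℝ} (hq0 : 0 < q) (hq1 : q < 1) (m : ℕ) : 1 ≤ qint q (m+1) := by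
  rw [qint, le_div_iff₀ (q1pos hq1), one_mul]
  have : q ^ (m+1) ≤ q := by
    calc q ^ (m+1) = q ^ m * q := by ring
    _ ≤ 1 * q := by
      exact mul_le_mul_of_nonneg_right (pow_le_one₀ hq0.le hq1.le) hq0.le
    _ = q := one_mul q
  linarith

lemma qint_le {q : ℝ} (hq0 : 0 < q) (hq1 : q < 1) (m : ℕ) : qint q m ≤ 1 / (1 - q) := by
  rw [qint, div_le_div_iff₀ (q1pos hq1) (q1pos hq1)]
  nlinarith [pow_pos hq0 m, q1pos hq1]

lemma qint_nonneg {q : ℝ} (hq0 : 0 < q) (hq1 : q < 1) (m : ℕ) : 0 ≤ qint q m := by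
  cases m with
  | zero => simp [qint]
  | succ n => exact (qint_pos hq0 hq1 n).le

lemma qint_add {q : ℝ} (hq1 : q < 1) (a b : ℕ) :
    qint q (a + b) = qint q a + q ^ a * qint q b := by
  have h : (1:ℝ) - q ≠ 0 := (q1pos hq1).ne'
  rw [qint, qint, qint, pow_add]
  field_simp
  ring

noncomputable def Hq (q : ℝ) (d : ℕ) : ℝ := 1 / qint q (d+1)
noncomputable def bq (q : ℝ) (m : ℕ) : ℝ := q ^ m / qint q m
noncomputable def Bq (q : ℝ) (N : ℕ) : ℝ := ∑ i ∈ Finset.range N, bq q (i+1)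

lemma Hq_diff {q : ℝ} (hq0 : 0 < q) (hq1 : q < 1) (d N : ℕ) :
    Hq q d - Hq q (d + N) = q ^ (d+1) * qint q N / (qint q (d+1) * qint q (d+N+1)) := by
  have h1 : qint q (d+1+N) = qint q (d+1) + q^(d+1) * qint q N := qint_add hq1 (d+1) N
  have h2 : (qint q (d+1)) ≠ 0 := (qint_pos hq0 hq1 d).ne'
  have h3 : (qint q (d+N+1)) ≠ 0 := (qint_pos hq0 hq1 (d+N)).ne'
  have e : d + 1 + N = d + N + 1 := by omega
  rw [Hq, Hq]
  rw [e] at h1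
  field_simp
  rw [h1]; ring

lemma Hq_diff_nonneg {q : ℝ} (hq0 : 0 < q) (hq1 : q < 1) (d N : ℕ) :
    0 ≤ Hq q d - Hq q (d + N) := by
  rw [Hq_diff hq0 hq1]
  apply div_nonneg (mul_nonneg (pow_pos (by linarith) _).le (qint_nonneg hq0 hq1 _)) (mul_nonneg (qint_pos hq0 hq1 _).le (qint_pos hq0 hq1 _).le)

lemma Hq_diff_le {q : ℝ} (hq0 : 0 < q) (hq1 : q < 1) (d N : ℕ) :
    Hq q d - Hq q (d + N) ≤ q ^ (d+1) / (1 - q) := by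
  rw [Hq_diff hq0 hq1]
  rw [mul_div_assoc]
  apply mul_le_mul_of_nonneg_left _ (pow_pos hq0 (d+1)).le
  calc qint q N / (qint q (d+1) * qint q (d+N+1)) ≤ qint q N / 1 := by
        apply div_le_div_of_nonneg_left (qint_nonneg hq0 hq1 N) one_pos
        nlinarith [qint_ge_one hq0 hq1 d, qint_ge_one hq0 hq1 (d+N)]
    _ = qint q N := div_one _
    _ ≤ 1 / (1-q) := qint_le hq0 hq1 N
    _ = (1-q)⁻¹ := one_div _

lemma tendsto_Hq {q : ℝ} (hq0 : 0 < q) (hq1 : q < 1) :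
    Tendsto (Hq q) atTop (nhds (1 - q)) := by
  have h : Tendsto (fun d : ℕ => q ^ (d+1)) atTop (nhds 0) := by
    have := (tendsto_pow_atTop_nhds_zero_of_lt_one hq0.le hq1).comp (tendsto_add_atTop_nat 1)
    exact this
  have h2 : Tendsto (fun d : ℕ => qint q (d+1)) atTop (nhds (1/(1-q))) := by
    have : Tendsto (fun d : ℕ => (1 - q^(d+1))/(1-q)) atTop (nhds ((1-0)/(1-q))) := by
      exact Tendsto.div (tendsto_const_nhds.sub h) tendsto_const_nhds (q1pos hq1).ne'
    simpa [qint] using this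
  have := Tendsto.div (tendsto_const_nhds (x := (1:ℝ))) h2 (by have := q1pos hq1; positivity)
  rw [one_div_one_div] at this
  exact this

lemma summable_Hq_diff {q : ℝ} (hq0 : 0 < q) (hq1 : q < 1) (N : ℕ) :
    Summable (fun d : ℕ => Hq q d - Hq q (d + N)) := by
  apply Summable.of_nonneg_of_le (fun d => Hq_diff_nonneg hq0 hq1 d N)
    (fun d => (Hq_diff_le hq0 hq1 d N).trans (le_of_eq ?_))
    ((summable_geometric_of_lt_one hq0.le hq1).mul_left (q/(1-q)))
  rw [pow_succ]
  ring

lemma hasSum_tele {q : ℝ} (hq0 : 0 < q) (hq1 : q < 1) (N : ℕ) :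
    HasSum (fun d : ℕ => Hq q d - Hq q (d + N)) (∑ i ∈ range N, (Hq q i - (1-q))) := by
  rw [(summable_Hq_diff hq0 hq1 N).hasSum_iff_tendsto_nat]
  have key : ∀ D : ℕ, ∑ d ∈ range D, (Hq q d - Hq q (d+N)) =
      ∑ i ∈ range N, Hq q i - ∑ i ∈ range N, Hq q (D+i) := by
    intro D
    induction D with
    | zero => simp
    | succ D ih =>
      rw [sum_range_succ, ih]
      have h2 : ∑ i ∈ range N, (Hq q (D+i) - Hq q (D+(i+1))) = Hq q (D+0) - Hq q (D+N) :=
        Finset.sum_range_sub' (fun i => Hq q (D+i)) N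
      rw [Finset.sum_sub_distrib] at h2
      have h3 : ∑ i ∈ range N, Hq q (D+(i+1)) = ∑ i ∈ range N, Hq q (D+1+i) := by
        apply Finset.sum_congr rfl
        intro i _
        congr 1
        omega
      rw [h3] at h2
      simp only [add_zero] at h2
      linarith
  simp only [key]
  have htend : Tendsto (fun D : ℕ => ∑ i ∈ range N, Hq q (D+i)) atTop
      (nhds (∑ i ∈ range N, (1-q))) := by
    apply tendsto_finset_sum
    intro i _
    exact (tendsto_Hq hq0 hq1).comp (tendsto_add_atTop_nat i)
  have := tendsto_const_nhds (x := ∑ i ∈ range N, Hq q i) (f := atTop (α := ℕ)) |>.sub htend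
  simpa [Finset.sum_sub_distrib] using this

-- bq and Bq basics
lemma bq_nonneg {q : ℝ} (hq0 : 0 < q) (hq1 : q < 1) (m : ℕ) : 0 ≤ bq q m :=
  div_nonneg (pow_pos hq0 m).le (qint_nonneg hq0 hq1 m)

lemma bq_le {q : ℝ} (hq0 : 0 < q) (hq1 : q < 1) (m : ℕ) : bq q (m+1) ≤ q ^ (m+1) :=
  div_le_self (pow_pos hq0 _).le (qint_ge_one hq0 hq1 m)

lemma bq_le_one {q : ℝ} (hq0 : 0 < q) (hq1 : q < 1) (m : ℕ) : bq q (m+1) ≤ 1 :=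
  (bq_le hq0 hq1 m).trans (pow_le_one₀ hq0.le hq1.le)

lemma Hq_sub_eq_bq {q : ℝ} (hq0 : 0 < q) (hq1 : q < 1) (i : ℕ) :
    Hq q i - (1 - q) = bq q (i+1) := by
  have h2 : (qint q (i+1)) ≠ 0 := (qint_pos hq0 hq1 i).ne'
  have h : (1-q) * qint q (i+1) = 1 - q^(i+1) := by
    rw [qint]
    field_simp [(q1pos hq1).ne']
  rw [Hq, bq]
  field_simp
  linear_combination -h

lemma Bq_nonneg {q : ℝ} (hq0 : 0 < q) (hq1 : q < 1) (N : ℕ) : 0 ≤ Bq q N :=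
  Finset.sum_nonneg fun i _ => bq_nonneg hq0 hq1 (i+1)

lemma Bq_le {q : ℝ} (hq0 : 0 < q) (hq1 : q < 1) (N : ℕ) : Bq q N ≤ 1 / (1 - q) := by
  have h1 : Bq q N ≤ ∑ i ∈ range N, q ^ (i+1) :=
    Finset.sum_le_sum fun i _ => bq_le hq0 hq1 i
  have h2 : ∑ i ∈ range N, q ^ (i+1) ≤ ∑ i ∈ range N, q ^ i :=
    Finset.sum_le_sum fun i _ => pow_le_pow_of_le_one hq0.le hq1.le (Nat.le_succ i)
  have h3 : ∑ i ∈ range N, q ^ i ≤ ∑' i : ℕ, q ^ i :=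
    Summable.sum_le_tsum _ (fun i _ => (pow_pos hq0 i).le) (summable_geometric_of_lt_one hq0.le hq1)
  rw [tsum_geometric_of_lt_one hq0.le hq1] at h3
  rw [one_div]
  linarith

-- summability workhorses
lemma summable_geo1 {q C : ℝ} (hq0 : 0 < q) (hq1 : q < 1) {g : ℕ → ℝ}
    (h0 : ∀ n, 0 ≤ g n) (hle : ∀ n, g n ≤ C * q ^ n) : Summable g :=
  Summable.of_nonneg_of_le h0 hle ((summable_geometric_of_lt_one hq0.le hq1).mul_left C)

lemma summable_geo2 {q C : ℝ} (hq0 : 0 < q) (hq1 : q < 1) {g : ℕ × ℕ → ℝ}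
    (h0 : ∀ p, 0 ≤ g p) (hle : ∀ p, g p ≤ C * (q ^ p.1 * q ^ p.2)) : Summable g := by
  have hs : Summable (fun p : ℕ × ℕ => q ^ p.1 * q ^ p.2) :=
    Summable.mul_of_nonneg (summable_geometric_of_lt_one hq0.le hq1)
      (summable_geometric_of_lt_one hq0.le hq1)
      (fun n => (pow_pos hq0 n).le) (fun n => (pow_pos hq0 n).le)
  exact Summable.of_nonneg_of_le h0 hle (hs.mul_left C)

noncomputable def Tj (q : ℝ) (k j : ℕ) (p : ℕ × ℕ) : ℝ :=
  q ^ ((k - j - 1) * (p.2 + p.1 + 2) + j * (p.2 + 1)) /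
    (qint q (p.2 + p.1 + 2) ^ (k - j) * qint q (p.2 + 1) ^ (j + 1))

noncomputable def Xf (q : ℝ) (k : ℕ) (p : ℕ × ℕ) : ℝ :=
  bq q (p.2+1) ^ (k-1) * (Hq q p.1 - Hq q (p.1 + (p.2+1))) / qint q (p.2+1)

noncomputable def Yf (q : ℝ) (k : ℕ) (p : ℕ × ℕ) : ℝ :=
  bq q (p.2+p.1+2) ^ (k-1) * (Hq q p.1 - Hq q (p.1 + (p.2+1))) / qint q (p.2+1)

lemma pointwise {q : ℝ} (hq0 : 0 < q) (hq1 : q < 1) {k : ℕ} (hk : 2 ≤ k) (p : ℕ × ℕ) :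
    ∑ j ∈ range (k-1), Tj q k j p = Xf q k p - Yf q k p := by
  obtain ⟨a, b⟩ := p
  have hM : 0 < qint q (b + a + 2) := qint_pos hq0 hq1 (b+a+1)
  have hN : 0 < qint q (b + 1) := qint_pos hq0 hq1 b
  have hD : 0 < qint q (a + 1) := qint_pos hq0 hq1 a
  have hMadd : qint q (b + a + 2) = qint q (a+1) + q^(a+1) * qint q (b+1) := by
    have : b + a + 2 = (a+1) + (b+1) := by omega
    rw [this, qint_add hq1]
  have hterm : ∀ j ∈ range (k-1), Tj q k j (a, b) =
      bq q (b+1) ^ j * bq q (b+a+2) ^ (k-1-1-j) *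
        (bq q (b+a+2) / (qint q (b+a+2) * qint q (b+1))) := by
    intro j hj
    simp only [mem_range] at hj
    have hexp : k - j - 1 = (k-1-1-j) + 1 := by omega
    have hkj : k - j = (k-1-1-j) + 2 := by omega
    rw [Tj]
    simp only
    rw [hexp, hkj, bq, bq, pow_add q, pow_mul, pow_mul]
    simp only [div_pow]
    field_simp
    ring
  rw [Finset.sum_congr rfl hterm, ← Finset.sum_mul]
  have hg := geom_sum₂_mul (bq q (b+1)) (bq q (b+a+2)) (k-1)
  have hvu : bq q (b+1) - bq q (b+a+2) =
      q^(b+1) * qint q (a+1) / (qint q (b+a+2) * qint q (b+1)) := by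
    rw [bq, bq, div_sub_div _ _ hN.ne' hM.ne', hMadd]
    rw [div_eq_div_iff (by positivity) (by positivity)]
    have hqq : q^(b+a+2) = q^(a+1) * q^(b+1) := by rw [← pow_add]; congr 1; omega
    rw [hqq]
    ring
  have hHd : Hq q a - Hq q (a + (b+1)) =
      q ^ (a+1) * qint q (b+1) / (qint q (a+1) * qint q (b+a+2)) := by
    have := Hq_diff hq0 hq1 a (b+1)
    have e : a + (b+1) + 1 = b + a + 2 := by omega
    rw [e] at this
    exact this
  rw [Xf, Yf]
  simp only
  rw [hHd]
  -- now pure algebra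
  have hu : bq q (b+a+2) / (qint q (b+a+2) * qint q (b+1)) =
      (bq q (b+1) - bq q (b+a+2)) * q^(a+1) / (qint q (a+1) * qint q (b+a+2)) := by
    rw [hvu, bq]
    have hqq : q^(b+a+2) = q^(a+1) * q^(b+1) := by rw [← pow_add]; congr 1; omega
    field_simp
    rw [hqq]
    ring
  rw [hu]
  rw [show ∀ x y z : ℝ, x * (y * q^(a+1) / z) = x * y * (q^(a+1)/z) from by intros; ring]
  rw [hg]
  field_simp

lemma Tj_nonneg {q : ℝ} (hq0 : 0 < q) (hq1 : q < 1) (k j : ℕ) (p : ℕ × ℕ) :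
    0 ≤ Tj q k j p := by
  rw [Tj]
  apply div_nonneg (pow_pos hq0 _).le
  apply mul_nonneg (pow_nonneg (qint_nonneg hq0 hq1 _) _) (pow_nonneg (qint_nonneg hq0 hq1 _) _)

lemma summable_Tj {q : ℝ} (hq0 : 0 < q) (hq1 : q < 1) {k j : ℕ} (hj : j < k - 1) :
    Summable (Tj q k j) := by
  apply summable_geo2 hq0 hq1 (C := 1) (fun p => Tj_nonneg hq0 hq1 k j p)
  intro p
  have h1 : (1:ℝ) ≤ qint q (p.2+p.1+2) ^ (k-j) * qint q (p.2+1) ^ (j+1) :=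
    one_le_mul_of_one_le_of_one_le
      (one_le_pow₀ (qint_ge_one hq0 hq1 (p.2+p.1+1)))
      (one_le_pow₀ (qint_ge_one hq0 hq1 p.2))
  have h2 : Tj q k j p ≤ q ^ ((k-j-1) * (p.2+p.1+2) + j * (p.2+1)) := by
    rw [Tj]
    exact div_le_self (pow_pos hq0 _).le h1
  have h3 : p.1 + p.2 ≤ (k-j-1) * (p.2+p.1+2) + j * (p.2+1) := by
    have : 1 ≤ k - j - 1 := by omega
    calc p.1 + p.2 ≤ p.2+p.1+2 := by omega
      _ = 1 * (p.2+p.1+2) := (one_mul _).symm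
      _ ≤ (k-j-1) * (p.2+p.1+2) := Nat.mul_le_mul_right _ this
      _ ≤ _ := Nat.le_add_right _ _
  calc Tj q k j p ≤ q ^ ((k-j-1) * (p.2+p.1+2) + j * (p.2+1)) := h2
    _ ≤ q ^ (p.1 + p.2) := pow_le_pow_of_le_one hq0.le hq1.le h3
    _ = 1 * (q ^ p.1 * q ^ p.2) := by rw [pow_add]; ring

lemma Xf_nonneg {q : ℝ} (hq0 : 0 < q) (hq1 : q < 1) (k : ℕ) (p : ℕ × ℕ) :
    0 ≤ Xf q k p := by
  rw [Xf]
  apply div_nonneg _ (qint_nonneg hq0 hq1 _)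
  exact mul_nonneg (pow_nonneg (bq_nonneg hq0 hq1 _) _) (Hq_diff_nonneg hq0 hq1 _ _)

lemma Yf_nonneg {q : ℝ} (hq0 : 0 < q) (hq1 : q < 1) (k : ℕ) (p : ℕ × ℕ) :
    0 ≤ Yf q k p := by
  rw [Yf]
  apply div_nonneg _ (qint_nonneg hq0 hq1 _)
  exact mul_nonneg (pow_nonneg (bq_nonneg hq0 hq1 _) _) (Hq_diff_nonneg hq0 hq1 _ _)

lemma bq_pow_le {q : ℝ} (hq0 : 0 < q) (hq1 : q < 1) {k : ℕ} (hk : 2 ≤ k) (m : ℕ) :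
    bq q (m+1) ^ (k-1) ≤ q ^ (m+1) := by
  calc bq q (m+1) ^ (k-1) ≤ bq q (m+1) ^ 1 :=
        pow_le_pow_of_le_one (bq_nonneg hq0 hq1 _) (bq_le_one hq0 hq1 m) (by omega)
    _ = bq q (m+1) := pow_one _
    _ ≤ q ^ (m+1) := bq_le hq0 hq1 m

lemma Hdiv_le {q : ℝ} (hq0 : 0 < q) (hq1 : q < 1) (d N n : ℕ) :
    (Hq q d - Hq q (d + N)) / qint q (n+1) ≤ q ^ d * (1/(1-q)) := by
  calc (Hq q d - Hq q (d + N)) / qint q (n+1) ≤ Hq q d - Hq q (d + N) :=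
        div_le_self (Hq_diff_nonneg hq0 hq1 _ _) (qint_ge_one hq0 hq1 n)
    _ ≤ q ^ (d+1) / (1-q) := Hq_diff_le hq0 hq1 d N
    _ ≤ q ^ d * (1/(1-q)) := by
        rw [div_eq_mul_one_div]
        apply mul_le_mul_of_nonneg_right
          (pow_le_pow_of_le_one hq0.le hq1.le (Nat.le_succ d))
        have := q1pos hq1; positivity

lemma summable_Xf {q : ℝ} (hq0 : 0 < q) (hq1 : q < 1) {k : ℕ} (hk : 2 ≤ k) :
    Summable (Xf q k) := by
  apply summable_geo2 hq0 hq1 (C := 1/(1-q)) (Xf_nonneg hq0 hq1 k)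
  intro p
  rw [Xf, mul_div_assoc]
  calc bq q (p.2+1) ^ (k-1) * ((Hq q p.1 - Hq q (p.1 + (p.2+1))) / qint q (p.2+1))
      ≤ q ^ (p.2+1) * (q ^ p.1 * (1/(1-q))) := by
        apply mul_le_mul (bq_pow_le hq0 hq1 hk p.2) (Hdiv_le hq0 hq1 p.1 (p.2+1) p.2)
          (div_nonneg (Hq_diff_nonneg hq0 hq1 _ _) (qint_nonneg hq0 hq1 _))
          (pow_pos hq0 _).le
    _ ≤ q ^ p.2 * (q ^ p.1 * (1/(1-q))) := by
        apply mul_le_mul_of_nonneg_right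
          (pow_le_pow_of_le_one hq0.le hq1.le (Nat.le_succ p.2))
        have := q1pos hq1; positivity
    _ = 1/(1-q) * (q ^ p.1 * q ^ p.2) := by ring

lemma summable_Yf {q : ℝ} (hq0 : 0 < q) (hq1 : q < 1) {k : ℕ} (hk : 2 ≤ k) :
    Summable (Yf q k) := by
  apply summable_geo2 hq0 hq1 (C := 1/(1-q)) (Yf_nonneg hq0 hq1 k)
  intro p
  rw [Yf, mul_div_assoc]
  have hb : bq q (p.2+p.1+2) ^ (k-1) ≤ q ^ p.2 := by
    have e : p.2+p.1+2 = (p.2+p.1+1)+1 := by omega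
    calc bq q (p.2+p.1+2) ^ (k-1) ≤ q ^ (p.2+p.1+2) := by
          rw [e]; exact bq_pow_le hq0 hq1 hk (p.2+p.1+1)
      _ ≤ q ^ p.2 := pow_le_pow_of_le_one hq0.le hq1.le (by omega)
  calc bq q (p.2+p.1+2) ^ (k-1) * ((Hq q p.1 - Hq q (p.1 + (p.2+1))) / qint q (p.2+1))
      ≤ q ^ p.2 * (q ^ p.1 * (1/(1-q))) := by
        apply mul_le_mul hb (Hdiv_le hq0 hq1 p.1 (p.2+1) p.2)
          (div_nonneg (Hq_diff_nonneg hq0 hq1 _ _) (qint_nonneg hq0 hq1 _))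
          (pow_pos hq0 _).le
    _ = 1/(1-q) * (q ^ p.1 * q ^ p.2) := by ring

noncomputable def Gz (q : ℝ) (k n : ℕ) : ℝ := bq q (n+1) ^ (k-1) * Bq q (n+1) / qint q (n+1)
noncomputable def Gz' (q : ℝ) (k n : ℕ) : ℝ := bq q (n+1) ^ (k-1) * Bq q n / qint q (n+1)
noncomputable def Zf (q : ℝ) (k n : ℕ) : ℝ := bq q (n+1) ^ (k-1) * bq q (n+1) / qint q (n+1)

lemma summable_Gz' {q : ℝ} (hq0 : 0 < q) (hq1 : q < 1) {k : ℕ} (hk : 2 ≤ k) :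
    Summable (Gz' q k) := by
  apply summable_geo1 hq0 hq1 (C := 1/(1-q))
  · intro n
    exact div_nonneg (mul_nonneg (pow_nonneg (bq_nonneg hq0 hq1 _) _) (Bq_nonneg hq0 hq1 _))
      (qint_nonneg hq0 hq1 _)
  · intro n
    rw [Gz']
    calc bq q (n+1) ^ (k-1) * Bq q n / qint q (n+1) ≤ bq q (n+1) ^ (k-1) * Bq q n :=
          div_le_self (mul_nonneg (pow_nonneg (bq_nonneg hq0 hq1 _) _) (Bq_nonneg hq0 hq1 _))
            (qint_ge_one hq0 hq1 n)
      _ ≤ q ^ (n+1) * (1/(1-q)) := by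
          apply mul_le_mul (bq_pow_le hq0 hq1 hk n) (Bq_le hq0 hq1 n) (Bq_nonneg hq0 hq1 n)
            (pow_pos hq0 _).le
      _ ≤ 1/(1-q) * q ^ n := by
          rw [mul_comm]
          apply mul_le_mul_of_nonneg_left
            (pow_le_pow_of_le_one hq0.le hq1.le (Nat.le_succ n))
          have := q1pos hq1; positivity

lemma summable_Zf {q : ℝ} (hq0 : 0 < q) (hq1 : q < 1) {k : ℕ} (hk : 2 ≤ k) :
    Summable (Zf q k) := by
  apply summable_geo1 hq0 hq1 (C := 1)
  · intro n
    exact div_nonneg (mul_nonneg (pow_nonneg (bq_nonneg hq0 hq1 _) _) (bq_nonneg hq0 hq1 _))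
      (qint_nonneg hq0 hq1 _)
  · intro n
    rw [Zf]
    calc bq q (n+1) ^ (k-1) * bq q (n+1) / qint q (n+1) ≤ bq q (n+1) ^ (k-1) * bq q (n+1) :=
          div_le_self (mul_nonneg (pow_nonneg (bq_nonneg hq0 hq1 _) _) (bq_nonneg hq0 hq1 _))
            (qint_ge_one hq0 hq1 n)
      _ ≤ q ^ (n+1) * 1 := by
          apply mul_le_mul (bq_pow_le hq0 hq1 hk n) (bq_le_one hq0 hq1 n)
            (bq_nonneg hq0 hq1 _) (pow_pos hq0 _).le
      _ ≤ 1 * q ^ n := by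
          rw [mul_one, one_mul]
          exact pow_le_pow_of_le_one hq0.le hq1.le (Nat.le_succ n)

set_option maxHeartbeats 1000000 in
lemma tsumX {q : ℝ} (hq0 : 0 < q) (hq1 : q < 1) {k : ℕ} (hk : 2 ≤ k) :
    ∑' p : ℕ × ℕ, Xf q k p = ∑' n : ℕ, Gz q k n := by
  have hX := summable_Xf hq0 hq1 hk
  rw [Summable.tsum_prod hX, ← Summable.tsum_comm (f := fun d n : ℕ => Xf q k (d, n)) hX]
  apply tsum_congr
  intro b
  have h1 : ∀ c : ℕ, Xf q k (c, b) =
      (bq q (b+1) ^ (k-1) / qint q (b+1)) * (Hq q c - Hq q (c + (b+1))) := by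
    intro c
    rw [Xf]
    ring
  rw [tsum_congr h1, tsum_mul_left, (hasSum_tele hq0 hq1 (b+1)).tsum_eq]
  have h2 : ∑ i ∈ range (b+1), (Hq q i - (1-q)) = Bq q (b+1) := by
    rw [Bq]
    exact Finset.sum_congr rfl fun i _ => Hq_sub_eq_bq hq0 hq1 i
  rw [h2, Gz]
  ring

def diagE : (Σ s : ℕ, Fin (s+1)) ≃ ℕ × ℕ where
  toFun x := (x.1 - x.2.val, x.2.val)
  invFun p := ⟨p.1 + p.2, ⟨p.2, by omega⟩⟩
  left_inv := by
    rintro ⟨s, i⟩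
    have hi : i.val ≤ s := Nat.lt_succ_iff.mp i.isLt
    have h : s - i.val + i.val = s := Nat.sub_add_cancel hi
    refine Sigma.ext ?_ ?_ <;> dsimp only
    · exact h
    · rw [Fin.heq_ext_iff (by rw [h])]
  right_inv := by
    rintro ⟨a, b⟩
    simp

set_option maxHeartbeats 1000000 in
lemma tsumY {q : ℝ} (hq0 : 0 < q) (hq1 : q < 1) {k : ℕ} (hk : 2 ≤ k) :
    ∑' p : ℕ × ℕ, Yf q k p = ∑' s : ℕ, Gz' q k (s+1) := by
  have hY := summable_Yf hq0 hq1 hk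
  rw [← diagE.tsum_eq (Yf q k)]
  have hY' : Summable (fun x : (Σ s : ℕ, Fin (s+1)) => Yf q k (diagE x)) :=
    (Equiv.summable_iff diagE).mpr hY
  rw [Summable.tsum_sigma hY']
  apply tsum_congr
  intro s
  rw [tsum_fintype]
  have h0 : ∀ i : Fin (s+1), Yf q k (diagE ⟨s, i⟩) = Yf q k (s - i.val, i.val) := fun i => rfl
  rw [Finset.sum_congr rfl (fun i _ => h0 i), Fin.sum_univ_eq_sum_range (fun i => Yf q k (s - i, i))]
  have hterm : ∀ i ∈ range (s+1), Yf q k (s - i, i) =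
      (bq q (s+2) ^ (k-1) / qint q (s+2)) * bq q (s - i + 1) := by
    intro i hi
    simp only [mem_range] at hi
    have hi' : i ≤ s := by omega
    rw [Yf]
    simp only
    have e1 : i + (s - i) + 2 = s + 2 := by omega
    have hHd : Hq q (s-i) - Hq q ((s-i) + (i+1)) =
        q ^ (s-i+1) * qint q (i+1) / (qint q (s-i+1) * qint q (s+2)) := by
      have := Hq_diff hq0 hq1 (s-i) (i+1)
      have e2 : s - i + (i+1) + 1 = s + 2 := by omega
      rw [e2] at this
      exact this
    rw [e1, hHd]
    simp only [bq]
    have hNi : qint q (i+1) ≠ 0 := (qint_pos hq0 hq1 i).ne'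
    have hNd : qint q (s-i+1) ≠ 0 := (qint_pos hq0 hq1 (s-i)).ne'
    have hNm : qint q (s+2) ≠ 0 := (qint_pos hq0 hq1 (s+1)).ne'
    field_simp
  rw [Finset.sum_congr rfl hterm, ← Finset.mul_sum]
  have hrefl : ∑ i ∈ range (s+1), bq q (s - i + 1) = Bq q (s+1) := by
    have := Finset.sum_range_reflect (fun i => bq q (i+1)) (s+1)
    rw [Bq, ← this]
    apply Finset.sum_congr rfl
    intro i hi
    congr 2
  rw [hrefl, Gz']
  ring

lemma core {q : ℝ} (hq0 : 0 < q) (hq1 : q < 1) {k : ℕ} (hk : 2 ≤ k) :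
    ∑ j ∈ range (k-1), zetaQ2 q (k-j) (j+1) = zetaQ q (k+1) := by
  have h1 : ∀ j ∈ range (k-1), zetaQ2 q (k-j) (j+1) = ∑' p : ℕ × ℕ, Tj q k j p := by
    intro j _
    rw [zetaQ2]
    apply tsum_congr
    intro p
    rw [Tj]
    simp
  calc ∑ j ∈ range (k-1), zetaQ2 q (k-j) (j+1)
      = ∑ j ∈ range (k-1), ∑' p : ℕ × ℕ, Tj q k j p := Finset.sum_congr rfl h1
    _ = ∑' p : ℕ × ℕ, ∑ j ∈ range (k-1), Tj q k j p :=
        (Summable.tsum_finsetSum fun j hj => summable_Tj hq0 hq1 (mem_range.mp hj)).symm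
    _ = ∑' p : ℕ × ℕ, (Xf q k p - Yf q k p) := tsum_congr (fun p => pointwise hq0 hq1 hk p)
    _ = ∑' p : ℕ × ℕ, Xf q k p - ∑' p : ℕ × ℕ, Yf q k p :=
        Summable.tsum_sub (summable_Xf hq0 hq1 hk) (summable_Yf hq0 hq1 hk)
    _ = ∑' n : ℕ, Gz q k n - ∑' s : ℕ, Gz' q k (s+1) := by
        rw [tsumX hq0 hq1 hk, tsumY hq0 hq1 hk]
    _ = ∑' n : ℕ, Zf q k n := by
        have hsplit : ∀ n, Gz q k n = Zf q k n + Gz' q k n := by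
          intro n
          rw [Gz, Zf, Gz', Bq, Finset.sum_range_succ, ← Bq]
          ring
        rw [tsum_congr hsplit, Summable.tsum_add (summable_Zf hq0 hq1 hk) (summable_Gz' hq0 hq1 hk)]
        rw [Summable.tsum_eq_zero_add (summable_Gz' hq0 hq1 hk)]
        have h0 : Gz' q k 0 = 0 := by simp [Gz', Bq]
        rw [h0]
        ring
    _ = zetaQ q (k+1) := by
        rw [zetaQ]
        apply tsum_congr
        intro n
        have e : (k-1) + 1 = k := by omega
        rw [Zf, ← pow_succ, e, bq, div_pow, ← pow_mul, div_div, ← pow_succ]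
        have e2 : (n+1) * k = (k + 1 - 1) * (n+1) := by rw [Nat.add_sub_cancel, Nat.mul_comm]
        rw [e2]

end Aux

theorem stmt_8 (q t : ℝ) (hq0 : 0 < q) (hq1 : q < 1) (k : ℕ) (hk : 2 ≤ k) :
    ∑ j ∈ Finset.range (k - 1), zetaQT q t (k - j) (j + 1) =
      (1 + ((k : ℝ) - 1) * t) * zetaQ q (k + 1) +
        t * ((k : ℝ) - 1) * (1 - q) * zetaQ q k := by
  have h1 : ∀ j ∈ Finset.range (k - 1), zetaQT q t (k - j) (j + 1) =
      zetaQ2 q (k - j) (j + 1) + t * (zetaQ q (k+1) + (1-q) * zetaQ q k) := by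
    intro j hj
    simp only [Finset.mem_range] at hj
    rw [zetaQT]
    have e1 : (k - j) + (j + 1) = k + 1 := by omega
    rw [e1]
    norm_num
  rw [Finset.sum_congr rfl h1, Finset.sum_add_distrib, Finset.sum_const,
    core hq0 hq1 hk, Finset.card_range, nsmul_eq_mul]
  have e2 : ((k - 1 : ℕ) : ℝ) = (k:ℝ) - 1 := by
    have h : (1:ℕ) ≤ k := by omega
    rw [Nat.cast_sub h]
    norm_num
  rw [e2]
  ring
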